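/- The n-th Motzkin number satisfies m_n = sum over i >= 0 of (1/(i+1)) * binomial(n, 2i) * binomial(2i, i). -/

import Mathlib

def pathSetZ (len : ℕ) (h : ℤ) : Set (List ℤ) :=
  {l | l.length = len ∧ (∀ x ∈ l, x = 1 ∨ x = -1 ∨ x = 0) ∧
    (∀ m, 0 ≤ h + (l.take m).sum) ∧ h + l.sum = 0}

/-- Paths with steps (1,1),(1,-1),(1,0) encoded by their height increments,
starting at height `h`, staying weakly above the x-axis and ending at height 0. -/
noncomputable def latticeCount (len : ℕ) (h : ℕ) : ℕ :=
  Nat.card {l : List ℤ // l.length = len ∧ (∀ x ∈ l, x = 1 ∨ x = -1 ∨ x = 0) ∧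
    (∀ m, 0 ≤ (h : ℤ) + (l.take m).sum) ∧ (h : ℤ) + l.sum = 0}

/-- The `n`-th Motzkin number, as the number of Motzkin paths of length `n`. -/
noncomputable def motzkin (n : ℕ) : ℕ := latticeCount n 0

lemma latticeCount_eq (len h : ℕ) : latticeCount len h = (pathSetZ len (h : ℤ)).ncard := by
  rw [latticeCount, ← Nat.card_coe_set_eq]
  rfl

lemma pathSetZ_finite (len : ℕ) (h : ℤ) : (pathSetZ len h).Finite := by
  classical
  have hsub : pathSetZ len h ⊆
      (fun l : List (Fin 3) => l.map (fun i => if i = 0 then (1:ℤ) else if i = 1 then -1 else 0)) ''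
        {l : List (Fin 3) | l.length = len} := by
    rintro l ⟨hlen, hmem, -, -⟩
    refine ⟨l.map (fun x : ℤ => if x = 1 then (0 : Fin 3) else if x = -1 then 1 else 2), by
      simpa using hlen, ?_⟩
    simp only [List.map_map]
    conv_rhs => rw [← List.map_id l]
    refine List.map_congr_left ?_
    intro x hx
    rcases hmem x hx with h | h | h <;> simp [h, Function.comp]
  exact Set.Finite.subset (Set.Finite.image _ (List.finite_length_eq _ len)) hsub

lemma mem_cons_iff (n : ℕ) (h a : ℤ) (hh : 0 ≤ h) (ha : a = 1 ∨ a = -1 ∨ a = 0) (t : List ℤ) :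
    (a :: t) ∈ pathSetZ (n+1) h ↔ t ∈ pathSetZ n (h + a) := by
  constructor
  · rintro ⟨hlen, hmem, hpre, hsum⟩
    refine ⟨by simpa using hlen, fun x hx => hmem x (List.mem_cons_of_mem a hx), ?_, ?_⟩
    · intro m
      have := hpre (m+1)
      simpa [add_assoc] using this
    · have := hsum
      simp only [List.sum_cons] at this
      linarith
  · rintro ⟨hlen, hmem, hpre, hsum⟩
    refine ⟨by simpa using hlen, ?_, ?_, ?_⟩
    · intro x hx
      rcases List.mem_cons.mp hx with rfl | hx
      · exact ha
      · exact hmem x hx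
    · intro m
      cases m with
      | zero => simpa using hh
      | succ m =>
        have := hpre m
        simp only [List.take_succ_cons, List.sum_cons]
        linarith
    · simp only [List.sum_cons]
      linarith

lemma pathSetZ_succ (n : ℕ) (h : ℤ) (hh : 0 ≤ h) :
    pathSetZ (n+1) h = (fun t => (1:ℤ) :: t) '' pathSetZ n (h+1) ∪
      (fun t => (0:ℤ) :: t) '' pathSetZ n h ∪
      (fun t => (-1:ℤ) :: t) '' pathSetZ n (h-1) := by
  ext l
  constructor
  · intro hl
    obtain ⟨hlen, hmem, -, -⟩ := id hl
    cases l with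
    | nil => simp at hlen
    | cons a t =>
      rcases hmem a (by simp) with rfl | rfl | rfl
      · exact Or.inl <| Or.inl ⟨t, (mem_cons_iff n h 1 hh (by tauto) t).mp hl, rfl⟩
      · refine Or.inr ⟨t, ?_, rfl⟩
        have := (mem_cons_iff n h (-1) hh (by tauto) t).mp hl
        simpa [sub_eq_add_neg] using this
      · refine Or.inl <| Or.inr ⟨t, ?_, rfl⟩
        have := (mem_cons_iff n h 0 hh (by tauto) t).mp hl
        simpa using this
  · rintro ((⟨t, ht, rfl⟩ | ⟨t, ht, rfl⟩) | ⟨t, ht, rfl⟩)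
    · exact (mem_cons_iff n h 1 hh (by tauto) t).mpr ht
    · exact (mem_cons_iff n h 0 hh (by tauto) t).mpr (by simpa using ht)
    · exact (mem_cons_iff n h (-1) hh (by tauto) t).mpr (by simpa [sub_eq_add_neg] using ht)

lemma disj_cons (a b : ℤ) (hab : a ≠ b) (s t : Set (List ℤ)) :
    Disjoint ((fun l => a :: l) '' s) ((fun l => b :: l) '' t) := by
  rw [Set.disjoint_left]
  rintro x ⟨u, -, rfl⟩ ⟨v, -, hv⟩
  simp only [List.cons.injEq] at hv
  exact hab hv.1.symm

lemma ncard_succ (n : ℕ) (h : ℤ) (hh : 0 ≤ h) :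
    (pathSetZ (n+1) h).ncard =
      (pathSetZ n (h+1)).ncard + (pathSetZ n h).ncard + (pathSetZ n (h-1)).ncard := by
  have f1 := (pathSetZ_finite n (h+1)).image (fun t => (1:ℤ) :: t)
  have f0 := (pathSetZ_finite n h).image (fun t => (0:ℤ) :: t)
  have fm := (pathSetZ_finite n (h-1)).image (fun t => (-1:ℤ) :: t)
  rw [pathSetZ_succ n h hh,
    Set.ncard_union_eq (Set.disjoint_union_left.mpr
      ⟨disj_cons _ _ (by norm_num) _ _, disj_cons _ _ (by norm_num) _ _⟩) (f1.union f0) fm,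
    Set.ncard_union_eq (disj_cons _ _ (by norm_num) _ _) f1 f0]
  simp [Set.ncard_image_of_injective _ (List.cons_injective)]

lemma pathSetZ_zero (h : ℤ) : pathSetZ 0 h = if h = 0 then {([] : List ℤ)} else ∅ := by
  ext l
  simp only [pathSetZ, Set.mem_setOf_eq, List.length_eq_zero_iff]
  constructor
  · rintro ⟨rfl, -, -, hsum⟩
    simp only [List.sum_nil, add_zero] at hsum
    simp [hsum]
  · intro hl
    split_ifs at hl with h0
    · simp only [Set.mem_singleton_iff] at hl
      subst hl
      exact ⟨rfl, by simp, by simp [h0], by simp [h0]⟩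
    · simp at hl

lemma ncard_zero (h : ℤ) : (pathSetZ 0 h).ncard = if h = 0 then 1 else 0 := by
  rw [pathSetZ_zero]
  split_ifs <;> simp

lemma ncard_neg (n : ℕ) (h : ℤ) (hh : h < 0) : (pathSetZ n h).ncard = 0 := by
  have : pathSetZ n h = ∅ := by
    ext l
    simp only [pathSetZ, Set.mem_setOf_eq, Set.mem_empty_iff_false, iff_false]
    rintro ⟨-, -, hpre, -⟩
    have := hpre 0
    simp at this
    omega
  simp [this]

noncomputable def bb (u h : ℕ) : ℚ := ((2*u+h).choose u : ℚ) * (h+1) / (u+h+1)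

lemma bb0 (h : ℕ) : bb 0 h = 1 := by
  have h1 : ((h:ℚ)+1) ≠ 0 := by positivity
  simp only [bb, Nat.mul_zero, Nat.zero_add, Nat.choose_zero_right, Nat.cast_one, one_mul]
  rw [div_eq_one_iff_eq] <;> push_cast <;> [ring; positivity]

lemma bbA (u : ℕ) : bb (u+1) 0 = bb u 1 := by
  have key : (2*(u+1)+0).choose (u+1) = 2 * ((2*u+1).choose u) := by
    have e1 : 2*(u+1)+0 = (2*u+1)+1 := by ring
    rw [e1, Nat.choose_succ_succ, Nat.choose_symm_half]
    ring
  rw [bb, bb, key]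
  push_cast
  have : (u:ℚ) + 1 + 0 + 1 = u + 1 + 1 := by ring
  rw [this]
  field_simp
  ring

lemma bbB (u h : ℕ) : bb (u+1) (h+1) = bb u (h+2) + bb (u+1) h := by
  have p1 : (2*(u+1)+(h+1)).choose (u+1) = (2*u+h+2).choose u + (2*u+h+2).choose (u+1) := by
    have e1 : 2*(u+1)+(h+1) = (2*u+h+2)+1 := by ring
    rw [e1, Nat.choose_succ_succ]
  have p2 : (2*u+h+2).choose (u+1) * (u+1) = (2*u+h+2).choose u * (u+h+2) := by
    have := Nat.choose_succ_right_eq (2*u+h+2) u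
    have e2 : 2*u+h+2 - u = u+h+2 := by omega
    rw [e2] at this
    exact this
  have p2q : ((2*u+h+2).choose (u+1) : ℚ) * (u+1) = ((2*u+h+2).choose u : ℚ) * (u+h+2) := by
    exact_mod_cast congrArg (Nat.cast : ℕ → ℚ) p2
  rw [bb, bb, bb, p1]
  have e3 : 2*u+(h+2) = 2*u+h+2 := by ring
  have e4 : 2*(u+1)+h = 2*u+h+2 := by ring
  rw [e3, e4]
  push_cast
  have d1 : (u:ℚ)+1+(h+1)+1 ≠ 0 := by positivity
  have d2 : (u:ℚ)+(h+2)+1 ≠ 0 := by positivity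
  have d3 : (u:ℚ)+1+h+1 ≠ 0 := by positivity
  field_simp
  ring_nf
  ring_nf at p2q
  nlinarith [p2q]

noncomputable def FF (n h : ℕ) : ℚ := ∑ u ∈ Finset.range (n+1), (n.choose (2*u+h) : ℚ) * bb u h

lemma FF_big (n h m : ℕ) (hm : n + 1 ≤ m) :
    FF n h = ∑ u ∈ Finset.range m, (n.choose (2*u+h) : ℚ) * bb u h := by
  rw [FF]
  apply Finset.sum_subset (Finset.range_subset_range.mpr hm)
  intro u _ hu
  simp only [Finset.mem_range, not_lt] at hu
  rw [Nat.choose_eq_zero_of_lt (by omega)]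
  simp

lemma FR0 (n : ℕ) : FF (n+1) 0 = FF n 1 + FF n 0 := by
  rw [FF_big (n+1) 0 (n+2) (by omega), FF_big n 0 (n+2) (by omega)]
  have e1 : ∀ u ∈ Finset.range (n+2), ((n+1).choose (2*u+0) : ℚ) * bb u 0 =
      (n.choose (2*u+0) : ℚ) * bb u 0 +
      (if u = 0 then 0 else (n.choose (2*(u-1)+1) : ℚ) * bb (u-1) 1) := by
    intro u _
    cases u with
    | zero => norm_num
    | succ v =>
      have e : 2*(v+1)+0 = (2*v+1)+1 := by ring
      rw [e, Nat.choose_succ_succ (n:=n), if_neg (by omega)]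
      simp only [Nat.succ_eq_add_one, Nat.add_sub_cancel]
      push_cast
      rw [bbA]
      ring_nf
  have hIf : ∑ u ∈ Finset.range (n+2),
      (if u = 0 then 0 else ((n.choose (2*(u-1)+1) : ℚ)) * bb (u-1) 1) = FF n 1 := by
    rw [Finset.sum_range_succ' _ (n+1)]
    simp only [if_neg (Nat.succ_ne_zero _), Nat.add_sub_cancel, if_pos rfl, add_zero]
    rw [FF_big n 1 (n+1) le_rfl]
    simp
  rw [Finset.sum_congr rfl e1, Finset.sum_add_distrib, hIf]
  ring

lemma FRS (n h : ℕ) : FF (n+1) (h+1) = FF n (h+2) + FF n (h+1) + FF n h := by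
  rw [FF_big (n+1) (h+1) (n+2) (by omega), FF_big n (h+1) (n+2) (by omega),
    FF_big n h (n+2) (by omega)]
  have e1 : ∀ u ∈ Finset.range (n+2), ((n+1).choose (2*u+(h+1)) : ℚ) * bb u (h+1) =
      (n.choose (2*u+(h+1)) : ℚ) * bb u (h+1) + (n.choose (2*u+h) : ℚ) * bb u h +
      (if u = 0 then 0 else (n.choose (2*(u-1)+(h+2)) : ℚ) * bb (u-1) (h+2)) := by
    intro u _
    have ep : 2*u+(h+1) = (2*u+h)+1 := by ring
    rw [ep, Nat.choose_succ_succ (n:=n)]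
    simp only [Nat.succ_eq_add_one]
    push_cast
    cases u with
    | zero =>
      rw [if_pos rfl, bb0, bb0]
      norm_num
      ring
    | succ v =>
      rw [if_neg (by omega)]
      simp only [Nat.add_sub_cancel]
      have hb : bb (v+1) (h+1) = bb v (h+2) + bb (v+1) h := bbB v h
      rw [hb]
      have e5 : 2*v+(h+2) = 2*(v+1)+h := by ring
      rw [e5]
      ring_nf
  have hIf : ∑ u ∈ Finset.range (n+2),
      (if u = 0 then 0 else ((n.choose (2*(u-1)+(h+2)) : ℚ)) * bb (u-1) (h+2)) = FF n (h+2) := by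
    rw [Finset.sum_range_succ' _ (n+1)]
    simp only [if_neg (Nat.succ_ne_zero _), Nat.add_sub_cancel, if_pos rfl, add_zero]
    rw [FF_big n (h+2) (n+1) le_rfl]
    simp
  rw [Finset.sum_congr rfl e1, Finset.sum_add_distrib, Finset.sum_add_distrib, hIf]
  ring

lemma main_count (n : ℕ) : ∀ h : ℕ, ((pathSetZ n (h:ℤ)).ncard : ℚ) = FF n h := by
  induction n with
  | zero =>
    intro h
    rw [ncard_zero]
    cases h with
    | zero => simp [FF, bb0]
    | succ k =>
      rw [if_neg (by exact_mod_cast Nat.succ_ne_zero k)]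
      simp [FF, Nat.choose_eq_zero_of_lt]
  | succ n ih =>
    intro h
    rw [ncard_succ n (h:ℤ) (by positivity)]
    have c1 : ((h:ℤ)+1) = ((h+1 : ℕ) : ℤ) := by push_cast; ring
    rw [c1]
    cases h with
    | zero =>
      have c2 : ((0:ℕ):ℤ) - 1 = -1 := by norm_num
      rw [c2, ncard_neg n (-1) (by norm_num)]
      have g1 := ih 1
      have g0 := ih 0
      push_cast at g1 g0 ⊢
      rw [g1, g0, FR0]
      ring
    | succ k =>
      have c2 : (((k+1:ℕ)):ℤ) - 1 = ((k:ℕ):ℤ) := by push_cast; ring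
      rw [c2]
      have e : k+1+1 = k+2 := rfl
      have g2 := ih (k+1+1)
      have g1 := ih (k+1)
      have g0 := ih k
      rw [e] at g2
      push_cast at g2 g1 g0 ⊢
      ring_nf at g2 g1 ⊢
      rw [g2, g1, g0]
      have := FRS n k
      ring_nf at this
      rw [this]

/-- Regev's formula for the Motzkin numbers. -/
theorem motzkin_sum_formula (n : ℕ) :
    (motzkin n : ℚ) =
      ∑ i ∈ Finset.range (n + 1), (1 / (i + 1 : ℚ)) * n.choose (2 * i) * (2 * i).choose i := by
  have h1 : (motzkin n : ℚ) = FF n 0 := by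
    rw [motzkin, latticeCount_eq]
    exact main_count n 0
  rw [h1, FF]
  apply Finset.sum_congr rfl
  intro i _
  rw [bb]
  simp only [Nat.add_zero]
  push_cast
  field_simp
  ring
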